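/- Let X be a nonempty finite set, let H_cost : X → ℝ be an objective function, and let T : X → ℕ be a penalty (constraint-violation) function whose feasible set F = {x ∈ X : T(x) = 0} is nonempty. Then for every real λ > max_{x∈X} H_cost(x) − min_{x∈X} H_cost(x), the minimizers over X of the penalized objective H(x) = H_cost(x) + λ·T(x) are exactly the minimizers of H_cost over the feasible set F. -/
import Mathlib


/-- Exact penalty: for a finite nonempty search space `X`, an objective
`Hcost : X → ℝ` and a nonnegative-integer penalty `T : X → ℕ` whose feasible
set `{x | T x = 0}` is nonempty, any penalty weight `λ` exceeding the spread
`max Hcost - min Hcost` makes the minimizers of `Hcost + λ·T` over `X`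
exactly the minimizers of `Hcost` over the feasible set. -/
theorem exact_penalty_minimizers
    (X : Type*) [Fintype X] [Nonempty X]
    (Hcost : X → ℝ) (T : X → ℕ)
    (hF : ∃ x : X, T x = 0)
    (lam : ℝ)
    (hlam : Finset.univ.sup' Finset.univ_nonempty Hcost
              - Finset.univ.inf' Finset.univ_nonempty Hcost < lam) :
    ∀ x : X,
      (∀ y : X, Hcost x + lam * (T x : ℝ) ≤ Hcost y + lam * (T y : ℝ))
        ↔ (T x = 0 ∧ ∀ y : X, T y = 0 → Hcost x ≤ Hcost y) := by
  obtain ⟨x0, hx0⟩ := hF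
  have hle_sup : ∀ z : X, Hcost z ≤ Finset.univ.sup' Finset.univ_nonempty Hcost :=
    fun z => Finset.le_sup' Hcost (Finset.mem_univ z)
  have hinf_le : ∀ z : X, Finset.univ.inf' Finset.univ_nonempty Hcost ≤ Hcost z :=
    fun z => Finset.inf'_le Hcost (Finset.mem_univ z)
  intro x
  constructor
  · intro h
    have hx : T x = 0 := by
      by_contra hne
      have h1 : (1 : ℝ) ≤ (T x : ℝ) := by
        exact_mod_cast Nat.one_le_iff_ne_zero.mpr hne
      have := h x0
      rw [hx0] at this
      simp at this
      -- this : Hcost x + lam * T x ≤ Hcost x0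
      have hlampos : 0 < lam := lt_of_le_of_lt (by
        have := hle_sup x0
        have := hinf_le x0
        linarith [hle_sup x0, hinf_le x0]) hlam
      have : lam ≤ Hcost x0 - Hcost x := by nlinarith
      have := hle_sup x0
      have := hinf_le x
      linarith
    refine ⟨hx, fun y hy => ?_⟩
    have := h y
    rw [hx, hy] at this
    simpa using this
  · rintro ⟨hx, hmin⟩ y
    rw [hx]
    by_cases hy : T y = 0
    · rw [hy]; simpa using hmin y hy
    · have h1 : (1 : ℝ) ≤ (T y : ℝ) := by
        exact_mod_cast Nat.one_le_iff_ne_zero.mpr hy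
      have hlampos : 0 < lam := lt_of_le_of_lt (by
        linarith [hle_sup x0, hinf_le x0]) hlam
      have := hle_sup x
      have := hinf_le y
      push_cast
      nlinarith
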